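/- arXiv:math/0702409 — 4 statements merged into one kernel-verified Lean document; each statement's English description precedes it below -/
import Mathlib

section
/- Every uniformly integrable subset A of L^1(P) over a probability space is contained in the unit ball B^F(P) of some Orlicz space: there exists a Young function F such that ‖f‖_F ≤ 1 for all f ∈ A. -/
open MeasureTheory Filter Set Topology

structure IsYoung (F Fp : ℝ → ℝ) : Prop where
  deriv : ∀ x ∈ Set.Ici (0:ℝ), HasDerivWithinAt F (Fp x) (Set.Ici 0) x
  cont : ContinuousOn Fp (Set.Ici 0)
  nonneg : ∀ x ∈ Set.Ici (0:ℝ), 0 ≤ F x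
  map_zero : F 0 = 0
  deriv_zero : Fp 0 = 0
  strictMono : StrictMonoOn Fp (Set.Ici 0)
  tendsto_atTop : Filter.Tendsto Fp Filter.atTop Filter.atTop

namespace DLVP

noncomputable def bump (c t : ℝ) : ℝ := min 1 (max 0 (t - c))
lemma bump_continuous (c : ℝ) : Continuous (bump c) := by unfold bump; fun_prop
lemma bump_nonneg (c t : ℝ) : 0 ≤ bump c t := le_min one_pos.le (le_max_left _ _)
lemma bump_le_one (c t : ℝ) : bump c t ≤ 1 := min_le_left _ _
lemma bump_mono (c : ℝ) : Monotone (bump c) := fun s t h => by unfold bump; gcongr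
lemma bump_eq_zero {c t : ℝ} (h : t ≤ c) : bump c t = 0 := by
  unfold bump; rw [max_eq_left (by linarith), min_eq_right (by norm_num)]
lemma bump_eq_one {c t : ℝ} (h : c + 1 ≤ t) : bump c t = 1 := by
  unfold bump; rw [max_eq_right (by linarith), min_eq_left (by linarith)]
noncomputable def hh (t : ℝ) : ℝ := t / (1 + |t|)
lemma hh_continuous : Continuous hh := by
  apply Continuous.div continuous_id (by fun_prop); intro t; positivity
lemma hh_nonneg {t : ℝ} (h : 0 ≤ t) : 0 ≤ hh t := by unfold hh; positivity
lemma hh_le_one {t : ℝ} (h : 0 ≤ t) : hh t ≤ 1 := by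
  unfold hh; rw [div_le_one (by positivity), abs_of_nonneg h]; linarith
lemma hh_zero : hh 0 = 0 := by simp [hh]
lemma hh_strictMonoOn : StrictMonoOn hh (Set.Ici 0) := by
  intro s hs t ht hst
  simp only [mem_Ici] at hs ht
  unfold hh
  rw [abs_of_nonneg hs, abs_of_nonneg ht, div_lt_div_iff₀ (by linarith) (by linarith)]
  nlinarith

section FpF
variable (δ : ℝ) (κ : ℕ → ℝ)

noncomputable def Fp (t : ℝ) : ℝ := δ * hh t + ∑ n ∈ Finset.range ⌈t⌉₊, bump (κ n) t
noncomputable def FpN (N : ℕ) (t : ℝ) : ℝ := δ * hh t + ∑ n ∈ Finset.range N, bump (κ n) t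

variable {δ κ}
variable (hκ : ∀ n : ℕ, (n : ℝ) ≤ κ n)
include hκ

lemma Fp_eq_FpN {t : ℝ} {N : ℕ} (h : t ≤ N) : Fp δ κ t = FpN δ κ N t := by
  unfold Fp FpN
  congr 1
  apply Finset.sum_subset
  · exact Finset.range_subset_range.2 (Nat.ceil_le.2 h)
  · intro n _ hn
    simp only [Finset.mem_range, not_lt] at hn
    exact bump_eq_zero (le_trans (le_trans (Nat.le_ceil t) (by exact_mod_cast hn)) (hκ n))

omit hκ in
lemma FpN_continuous (N : ℕ) : Continuous (FpN δ κ N) := by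
  unfold FpN
  exact (by
    exact (continuous_const.mul hh_continuous).add
      (continuous_finset_sum _ fun n _ => bump_continuous (κ n)))

lemma Fp_continuous : Continuous (Fp δ κ) := by
  rw [continuous_iff_continuousAt]
  intro t₀
  have hN : (t₀ : ℝ) < (⌈t₀⌉₊ + 1 : ℕ) := by
    push_cast; exact lt_of_le_of_lt (Nat.le_ceil t₀) (by linarith)
  have hev : Fp δ κ =ᶠ[nhds t₀] FpN δ κ (⌈t₀⌉₊ + 1) := by
    filter_upwards [eventually_lt_nhds hN] with t ht
    exact Fp_eq_FpN hκ ht.le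
  exact (FpN_continuous (δ := δ) (κ := κ) (⌈t₀⌉₊ + 1)).continuousAt.congr hev.symm

omit hκ in
lemma Fp_nonneg (hδ : 0 ≤ δ) {t : ℝ} (ht : 0 ≤ t) : 0 ≤ Fp δ κ t := by
  unfold Fp
  have h1 := hh_nonneg ht
  have h2 : 0 ≤ ∑ n ∈ Finset.range ⌈t⌉₊, bump (κ n) t :=
    Finset.sum_nonneg fun n _ => bump_nonneg _ _
  nlinarith

omit hκ in
lemma Fp_zero : Fp δ κ 0 = 0 := by
  unfold Fp; simp [hh_zero]

lemma Fp_strictMonoOn (hδ : 0 < δ) : StrictMonoOn (Fp δ κ) (Set.Ici 0) := by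
  intro s hs t ht hst
  simp only [mem_Ici] at hs ht
  set N := ⌈t⌉₊ with hN
  rw [Fp_eq_FpN hκ (le_trans hst.le (Nat.le_ceil t)), Fp_eq_FpN hκ (Nat.le_ceil t)]
  unfold FpN
  have h1 : δ * hh s < δ * hh t :=
    mul_lt_mul_of_pos_left (hh_strictMonoOn hs ht hst) hδ
  have h2 : ∑ n ∈ Finset.range N, bump (κ n) s ≤ ∑ n ∈ Finset.range N, bump (κ n) t :=
    Finset.sum_le_sum fun n _ => bump_mono (κ n) hst.le
  linarith

lemma Fp_tendsto_atTop (hδ : 0 ≤ δ) : Tendsto (Fp δ κ) atTop atTop := by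
  rw [tendsto_atTop]
  intro b
  set N := ⌈b⌉₊ with hNdef
  rw [eventually_atTop]
  refine ⟨max (N : ℝ) (1 + ∑ n ∈ Finset.range N, |κ n|), fun t ht => ?_⟩
  have htN : (N : ℝ) ≤ t := le_trans (le_max_left _ _) ht
  have ht0 : (0:ℝ) ≤ t := le_trans (Nat.cast_nonneg N) htN
  have hb : b ≤ (N : ℝ) := Nat.le_ceil b
  refine le_trans hb ?_
  rw [Fp_eq_FpN hκ (Nat.le_ceil t)]
  have hsub : Finset.range N ⊆ Finset.range ⌈t⌉₊ :=
    Finset.range_subset_range.2 (by exact_mod_cast le_trans htN (Nat.le_ceil t) |>.trans_eq rfl; )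
  have hone : ∀ n ∈ Finset.range N, bump (κ n) t = 1 := by
    intro n hn
    apply bump_eq_one
    have h1 : |κ n| ≤ ∑ m ∈ Finset.range N, |κ m| :=
      Finset.single_le_sum (fun m _ => abs_nonneg (κ m)) hn
    have h2 : (1 : ℝ) + ∑ m ∈ Finset.range N, |κ m| ≤ t := le_trans (le_max_right _ _) ht
    have := le_abs_self (κ n)
    linarith
  have hsum : (N : ℝ) ≤ ∑ n ∈ Finset.range ⌈t⌉₊, bump (κ n) t := by
    calc (N : ℝ) = ∑ n ∈ Finset.range N, bump (κ n) t := by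
          rw [Finset.sum_congr rfl hone]; simp
      _ ≤ _ := Finset.sum_le_sum_of_subset_of_nonneg hsub fun n _ _ => bump_nonneg _ _
  unfold FpN
  have := hh_nonneg ht0
  nlinarith

noncomputable def Ff (δ : ℝ) (κ : ℕ → ℝ) (x : ℝ) : ℝ := ∫ t in (0:ℝ)..x, Fp δ κ t

lemma Ff_hasDerivAt (x : ℝ) : HasDerivAt (Ff δ κ) (Fp δ κ x) x :=
  ((Fp_continuous hκ).integral_hasStrictDerivAt 0 x).hasDerivAt

omit hκ in
lemma Ff_zero : Ff δ κ 0 = 0 := intervalIntegral.integral_same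

omit hκ in
lemma Ff_nonneg (hδ : 0 ≤ δ) {x : ℝ} (hx : 0 ≤ x) : 0 ≤ Ff δ κ x :=
  intervalIntegral.integral_nonneg hx (fun t ht => Fp_nonneg hδ ht.1)

omit hκ in
lemma integral_bump_le {c x : ℝ} (hc : 0 ≤ c) (hx : 0 ≤ x) :
    ∫ t in (0:ℝ)..x, bump c t ≤ max 0 (x - c) := by
  rcases le_or_gt x c with h | h
  · have h0 : ∫ t in (0:ℝ)..x, bump c t = ∫ t in (0:ℝ)..x, (0:ℝ) := by
      apply intervalIntegral.integral_congr
      intro t ht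
      rw [uIcc_of_le hx] at ht
      exact bump_eq_zero (le_trans ht.2 h)
    rw [h0]
    simp
  · have hi1 : IntervalIntegrable (bump c) MeasureTheory.volume 0 c :=
      (bump_continuous c).intervalIntegrable _ _
    have hi2 : IntervalIntegrable (bump c) MeasureTheory.volume c x :=
      (bump_continuous c).intervalIntegrable _ _
    rw [← intervalIntegral.integral_add_adjacent_intervals hi1 hi2]
    have h0 : ∫ t in (0:ℝ)..c, bump c t = ∫ t in (0:ℝ)..c, (0:ℝ) := by
      apply intervalIntegral.integral_congr
      intro t ht
      rw [uIcc_of_le hc] at ht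
      exact bump_eq_zero ht.2
    have h2 : ∫ t in c..x, bump c t ≤ ∫ t in c..x, (1:ℝ) := by
      apply intervalIntegral.integral_mono_on h.le hi2
        (intervalIntegrable_const)
      intro t _
      exact bump_le_one c t
    have h3 : (∫ t in c..x, (1:ℝ)) = x - c := by simp
    rw [h0]
    simp only [intervalIntegral.integral_zero, zero_add]
    calc ∫ t in c..x, bump c t ≤ x - c := by rw [← h3]; exact h2
      _ ≤ max 0 (x - c) := le_max_right _ _

lemma Ff_le (hδ : 0 ≤ δ) (hκ0 : ∀ n, 0 ≤ κ n) {x : ℝ} (hx : 0 ≤ x) {N : ℕ} (hN : x ≤ N) :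
    Ff δ κ x ≤ δ * x + ∑ n ∈ Finset.range N, max 0 (x - κ n) := by
  have h1 : Ff δ κ x = ∫ t in (0:ℝ)..x, FpN δ κ N t := by
    apply intervalIntegral.integral_congr
    intro t ht
    rw [uIcc_of_le hx] at ht
    exact Fp_eq_FpN hκ (le_trans ht.2 hN)
  rw [h1]
  unfold FpN
  have hint1 : IntervalIntegrable (fun t => δ * hh t) MeasureTheory.volume 0 x :=
    (continuous_const.mul hh_continuous).intervalIntegrable _ _
  have hint2 : ∀ n ∈ Finset.range N,
      IntervalIntegrable (fun t => bump (κ n) t) MeasureTheory.volume 0 x :=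
    fun n _ => (bump_continuous (κ n)).intervalIntegrable _ _
  have hintS : IntervalIntegrable (fun t => ∑ n ∈ Finset.range N, bump (κ n) t)
      MeasureTheory.volume 0 x :=
    ((continuous_finset_sum _ fun n _ => bump_continuous (κ n)).intervalIntegrable _ _)
  rw [intervalIntegral.integral_add hint1 hintS,
    intervalIntegral.integral_finset_sum hint2, intervalIntegral.integral_const_mul]
  have hH : ∫ t in (0:ℝ)..x, hh t ≤ x := by
    have : ∫ t in (0:ℝ)..x, hh t ≤ ∫ t in (0:ℝ)..x, (1:ℝ) := by
      apply intervalIntegral.integral_mono_on hx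
        (hh_continuous.intervalIntegrable _ _) intervalIntegrable_const
      intro t ht
      exact hh_le_one ht.1
    simpa using this
  have hB : ∑ n ∈ Finset.range N, (∫ t in (0:ℝ)..x, bump (κ n) t)
      ≤ ∑ n ∈ Finset.range N, max 0 (x - κ n) :=
    Finset.sum_le_sum fun n _ => integral_bump_le (hκ0 n) hx
  have : δ * ∫ t in (0:ℝ)..x, hh t ≤ δ * x := mul_le_mul_of_nonneg_left hH hδ
  linarith

end FpF
end DLVP

open scoped ENNReal

theorem de_la_vallee_poussin_orlicz {Ω : Type*} [MeasurableSpace Ω] (P : Measure Ω)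
    [IsProbabilityMeasure P] (A : Set (Ω → ℝ))
    (hA : ∀ f ∈ A, Integrable f P)
    (hUI : ∀ ε : ℝ, 0 < ε → ∃ κ : ℝ, ∀ f ∈ A, ∫ ω in {ω | κ ≤ |f ω|}, |f ω| ∂P ≤ ε) :
    ∃ F Fp : ℝ → ℝ, IsYoung F Fp ∧
      ∀ f ∈ A, sInf {a : ℝ | 0 < a ∧ ∫ ω, F (|f ω| / a) ∂P ≤ 1} ≤ 1 := by
  obtain ⟨c0, hc0⟩ := hUI 1 one_pos
  set K : ℝ := max c0 0 with hKdef
  have hK0 : 0 ≤ K := le_max_right _ _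
  set δ : ℝ := (1/2) / (K + 1) with hδdef
  have hδpos : 0 < δ := by rw [hδdef]; positivity
  have hc : ∀ n : ℕ, ∃ c : ℝ, ∀ f ∈ A, ∫ ω in {ω | c ≤ |f ω|}, |f ω| ∂P ≤ (1/2:ℝ)^(n+2) :=
    fun n => hUI _ (by positivity)
  choose c hcspec using hc
  set κ : ℕ → ℝ := fun n => max (c n) n with hκdef
  have hκn : ∀ n : ℕ, (n:ℝ) ≤ κ n := fun n => le_max_right _ _
  have hκ0 : ∀ n, 0 ≤ κ n := fun n => le_trans (Nat.cast_nonneg n) (hκn n)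
  have hκc : ∀ n, c n ≤ κ n := fun n => le_max_left _ _
  refine ⟨DLVP.Ff δ κ, DLVP.Fp δ κ, ⟨?_, ?_, ?_, ?_, ?_, ?_, ?_⟩, ?_⟩
  · exact fun x _ => (DLVP.Ff_hasDerivAt hκn x).hasDerivWithinAt
  · exact (DLVP.Fp_continuous hκn).continuousOn
  · exact fun x hx => DLVP.Ff_nonneg hδpos.le hx
  · exact DLVP.Ff_zero
  · exact DLVP.Fp_zero
  · exact DLVP.Fp_strictMonoOn hκn hδpos
  · exact DLVP.Fp_tendsto_atTop hκn hδpos.le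
  intro f hf
  have hfi : Integrable f P := hA f hf
  have habs : AEMeasurable (fun ω => |f ω|) P := hfi.abs.aemeasurable
  have hFfcont : Continuous (DLVP.Ff δ κ) := by
    rw [continuous_iff_continuousAt]
    exact fun x => (DLVP.Ff_hasDerivAt hκn x).continuousAt
  -- the main integral bound
  have hmain : ∫ ω, DLVP.Ff δ κ (|f ω| / 1) ∂P ≤ 1 := by
    simp only [div_one]
    have hnn : 0 ≤ᵐ[P] fun ω => DLVP.Ff δ κ (|f ω|) :=
      Filter.Eventually.of_forall fun ω => DLVP.Ff_nonneg hδpos.le (abs_nonneg _)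
    have hmeas : AEMeasurable (fun ω => DLVP.Ff δ κ (|f ω|)) P :=
      hFfcont.measurable.comp_aemeasurable habs
    rw [integral_eq_lintegral_of_nonneg_ae hnn hmeas.aestronglyMeasurable]
    have hL : ∫⁻ ω, ENNReal.ofReal (DLVP.Ff δ κ (|f ω|)) ∂P ≤ 1 := by
      set φ : ℕ → Ω → ℝ≥0∞ := fun n ω => ENNReal.ofReal (max 0 (|f ω| - κ n)) with hφdef
      have hφmeas : ∀ n, AEMeasurable (φ n) P :=
        fun n => ((aemeasurable_const.max (habs.sub aemeasurable_const))).ennreal_ofReal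
      -- pointwise bound
      have hpt : ∀ ω, ENNReal.ofReal (DLVP.Ff δ κ (|f ω|)) ≤
          ENNReal.ofReal (δ * |f ω|) + ∑' n, φ n ω := by
        intro ω
        set x : ℝ := |f ω| with hxdef
        have hx0 : 0 ≤ x := abs_nonneg _
        have h1 := DLVP.Ff_le hκn hδpos.le hκ0 hx0 (Nat.le_ceil x)
        calc ENNReal.ofReal (DLVP.Ff δ κ x)
            ≤ ENNReal.ofReal (δ * x + ∑ n ∈ Finset.range ⌈x⌉₊, max 0 (x - κ n)) :=
              ENNReal.ofReal_le_ofReal h1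
          _ = ENNReal.ofReal (δ * x) +
              ENNReal.ofReal (∑ n ∈ Finset.range ⌈x⌉₊, max 0 (x - κ n)) :=
              ENNReal.ofReal_add (by positivity)
                (Finset.sum_nonneg fun n _ => le_max_left _ _)
          _ = ENNReal.ofReal (δ * x) + ∑ n ∈ Finset.range ⌈x⌉₊, φ n ω := by
              rw [ENNReal.ofReal_sum_of_nonneg fun n _ => le_max_left _ _]
          _ ≤ _ := add_le_add le_rfl (ENNReal.sum_le_tsum _)
      calc ∫⁻ ω, ENNReal.ofReal (DLVP.Ff δ κ (|f ω|)) ∂P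
          ≤ ∫⁻ ω, (ENNReal.ofReal (δ * |f ω|) + ∑' n, φ n ω) ∂P := lintegral_mono hpt
        _ = (∫⁻ ω, ENNReal.ofReal (δ * |f ω|) ∂P) + ∫⁻ ω, ∑' n, φ n ω ∂P :=
            lintegral_add_left' ((habs.const_mul δ).ennreal_ofReal) _
        _ = (∫⁻ ω, ENNReal.ofReal (δ * |f ω|) ∂P) + ∑' n, ∫⁻ ω, φ n ω ∂P := by
            rw [lintegral_tsum hφmeas]
        _ ≤ 2⁻¹ + 2⁻¹ := add_le_add ?_ ?_
        _ = 1 := by rw [← two_mul, ENNReal.mul_inv_cancel (by norm_num) (by norm_num)]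
      -- first term
      · have heq : ∀ ω, ENNReal.ofReal (δ * |f ω|) =
            ENNReal.ofReal δ * ENNReal.ofReal (|f ω|) :=
          fun ω => ENNReal.ofReal_mul hδpos.le
        simp_rw [heq]
        rw [lintegral_const_mul' _ _ ENNReal.ofReal_ne_top]
        have hS0 : NullMeasurableSet {ω | c0 ≤ |f ω|} P :=
          habs.nullMeasurable measurableSet_Ici
        have hind : ∀ ω, ENNReal.ofReal (|f ω|) ≤
            ENNReal.ofReal K +
              Set.indicator {ω | c0 ≤ |f ω|} (fun ω => ENNReal.ofReal (|f ω|)) ω := by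
          intro ω
          by_cases hω : ω ∈ {ω | c0 ≤ |f ω|}
          · rw [Set.indicator_of_mem hω]; exact le_add_self
          · rw [Set.indicator_of_notMem hω]
            simp only [Set.mem_setOf_eq, not_le] at hω
            rw [add_zero]
            exact ENNReal.ofReal_le_ofReal (le_trans hω.le (le_max_left _ _))
        have hbound : ∫⁻ ω, ENNReal.ofReal (|f ω|) ∂P ≤ ENNReal.ofReal (K + 1) := by
          calc ∫⁻ ω, ENNReal.ofReal (|f ω|) ∂P
              ≤ ∫⁻ ω, (ENNReal.ofReal K +
                  Set.indicator {ω | c0 ≤ |f ω|} (fun ω => ENNReal.ofReal (|f ω|)) ω) ∂P :=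
                lintegral_mono hind
            _ = ENNReal.ofReal K +
                ∫⁻ ω in {ω | c0 ≤ |f ω|}, ENNReal.ofReal (|f ω|) ∂P := by
                rw [lintegral_add_left measurable_const, lintegral_const, measure_univ,
                  mul_one, lintegral_indicator₀ hS0 _]
            _ = ENNReal.ofReal K + ENNReal.ofReal (∫ ω in {ω | c0 ≤ |f ω|}, |f ω| ∂P) := by
                rw [ofReal_integral_eq_lintegral_ofReal hfi.abs.integrableOn
                  (Filter.Eventually.of_forall fun ω => abs_nonneg _)]
            _ ≤ ENNReal.ofReal K + ENNReal.ofReal 1 :=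
                add_le_add le_rfl (ENNReal.ofReal_le_ofReal (hc0 f hf))
            _ = ENNReal.ofReal (K + 1) := (ENNReal.ofReal_add hK0 one_pos.le).symm
        calc ENNReal.ofReal δ * ∫⁻ ω, ENNReal.ofReal (|f ω|) ∂P
            ≤ ENNReal.ofReal δ * ENNReal.ofReal (K + 1) := mul_le_mul_right hbound _
          _ = ENNReal.ofReal (δ * (K + 1)) := (ENNReal.ofReal_mul hδpos.le).symm
          _ = ENNReal.ofReal (1/2) := by
              rw [hδdef, div_mul_cancel₀ _ (by positivity : (K:ℝ) + 1 ≠ 0)]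
          _ = 2⁻¹ := by
              rw [show (1/2:ℝ) = (2:ℝ)⁻¹ by norm_num, ENNReal.ofReal_inv_of_pos two_pos,
                ENNReal.ofReal_ofNat]
      -- tail terms
      · have hterm : ∀ n, ∫⁻ ω, φ n ω ∂P ≤ ENNReal.ofReal ((1/2:ℝ)^(n+2)) := by
          intro n
          have hSn : NullMeasurableSet {ω | κ n ≤ |f ω|} P :=
            habs.nullMeasurable measurableSet_Ici
          have hind : ∀ ω, φ n ω ≤
              Set.indicator {ω | κ n ≤ |f ω|} (fun ω => ENNReal.ofReal (|f ω|)) ω := by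
            intro ω
            by_cases hω : ω ∈ {ω | κ n ≤ |f ω|}
            · rw [Set.indicator_of_mem hω]
              apply ENNReal.ofReal_le_ofReal
              have := hκ0 n
              rw [max_le_iff]
              constructor
              · exact abs_nonneg _
              · linarith
            · rw [Set.indicator_of_notMem hω]
              simp only [Set.mem_setOf_eq, not_le] at hω
              rw [hφdef]
              simp only [max_eq_left (by linarith : |f ω| - κ n ≤ 0), ENNReal.ofReal_zero,
                le_refl]
          calc ∫⁻ ω, φ n ω ∂P
              ≤ ∫⁻ ω, Set.indicator {ω | κ n ≤ |f ω|}
                  (fun ω => ENNReal.ofReal (|f ω|)) ω ∂P := lintegral_mono hind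
            _ = ∫⁻ ω in {ω | κ n ≤ |f ω|}, ENNReal.ofReal (|f ω|) ∂P := by
                rw [lintegral_indicator₀ hSn _]
            _ = ENNReal.ofReal (∫ ω in {ω | κ n ≤ |f ω|}, |f ω| ∂P) := by
                rw [ofReal_integral_eq_lintegral_ofReal hfi.abs.integrableOn
                  (Filter.Eventually.of_forall fun ω => abs_nonneg _)]
            _ ≤ ENNReal.ofReal (∫ ω in {ω | c n ≤ |f ω|}, |f ω| ∂P) := by
                apply ENNReal.ofReal_le_ofReal
                apply setIntegral_mono_set hfi.abs.integrableOn
                  (Filter.Eventually.of_forall fun ω => abs_nonneg _)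
                apply HasSubset.Subset.eventuallyLE
                intro ω hω
                exact le_trans (hκc n) hω
            _ ≤ ENNReal.ofReal ((1/2:ℝ)^(n+2)) :=
                ENNReal.ofReal_le_ofReal (hcspec n f hf)
        calc ∑' n, ∫⁻ ω, φ n ω ∂P
            ≤ ∑' n : ℕ, ENNReal.ofReal ((1/2:ℝ)^(n+2)) := ENNReal.tsum_le_tsum hterm
          _ = ∑' n : ℕ, (2⁻¹:ℝ≥0∞)^(n+2) := by
              congr 1
              funext n
              rw [ENNReal.ofReal_pow (by norm_num), show (1/2:ℝ) = (2:ℝ)⁻¹ by norm_num,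
                ENNReal.ofReal_inv_of_pos two_pos, ENNReal.ofReal_ofNat]
          _ = 2⁻¹ := by
              have h : (fun n : ℕ => (2⁻¹:ℝ≥0∞)^(n+2)) = fun n => (2⁻¹:ℝ≥0∞)^n * (2⁻¹)^2 := by
                funext n; rw [pow_add]
              rw [h, ENNReal.tsum_mul_right, ENNReal.tsum_geometric, ENNReal.one_sub_inv_two,
                inv_inv, sq, ← mul_assoc,
                ENNReal.mul_inv_cancel (by norm_num) (by norm_num), one_mul]
    calc (∫⁻ ω, ENNReal.ofReal (DLVP.Ff δ κ (|f ω|)) ∂P).toReal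
        ≤ (1 : ℝ≥0∞).toReal := ENNReal.toReal_mono ENNReal.one_ne_top hL
      _ = 1 := ENNReal.toReal_one
  apply csInf_le
  · exact ⟨0, fun a ha => ha.1.le⟩
  · exact ⟨one_pos, hmain⟩
end

section
/- Let Q^n ≪ P^n be probability measures for each n. Then (Q^n) is contiguous with respect to (P^n) if and only if the sequence of densities (dQ^n/dP^n) is uniformly integrable with respect to (P^n), i.e., lim_{κ→∞} sup_n E_{P^n}[ (dQ^n/dP^n) 1_{{dQ^n/dP^n > κ}} ] = 0. -/
open MeasureTheory Filter Set Topology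
open scoped ENNReal

theorem contiguity_iff_uniformly_integrable_densities
    {Ω : ℕ → Type*} [∀ n, MeasurableSpace (Ω n)]
    (P Q : ∀ n, Measure (Ω n)) [∀ n, IsProbabilityMeasure (P n)]
    [∀ n, IsProbabilityMeasure (Q n)] (hac : ∀ n, Q n ≪ P n) :
    (∀ A : ∀ n, Set (Ω n), (∀ n, MeasurableSet (A n)) →
        Tendsto (fun n => P n (A n)) atTop (nhds 0) →
        Tendsto (fun n => Q n (A n)) atTop (nhds 0)) ↔
    (∀ ε : ℝ≥0∞, 0 < ε → ∃ κ₀ : ℝ≥0∞, κ₀ < ⊤ ∧ ∀ κ : ℝ≥0∞, κ₀ ≤ κ → ∀ n,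
        ∫⁻ x in {x | κ < (Q n).rnDeriv (P n) x}, (Q n).rnDeriv (P n) x ∂(P n) ≤ ε) := by
  classical
  set f : ∀ n, Ω n → ℝ≥0∞ := fun n => (Q n).rnDeriv (P n) with hfdef
  have hfmeas : ∀ n, Measurable (f n) := fun n => Measure.measurable_rnDeriv _ _
  have hsetmeas : ∀ n (c : ℝ≥0∞), MeasurableSet {x | c < f n x} := fun n c =>
    measurableSet_lt measurable_const (hfmeas n)
  have hlint : ∀ n, ∫⁻ x, f n x ∂ (P n) = 1 := by
    intro n
    rw [hfdef, Measure.lintegral_rnDeriv (hac n), measure_univ]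
  -- Markov's inequality
  have hMarkov : ∀ n (c : ℝ≥0∞), P n {x | c < f n x} ≤ c⁻¹ := by
    intro n c
    have h1 : c * P n {x | c ≤ f n x} ≤ 1 := by
      have := mul_meas_ge_le_lintegral (μ := P n) (hfmeas n) c
      rwa [hlint n] at this
    calc P n {x | c < f n x} ≤ P n {x | c ≤ f n x} :=
          measure_mono (setOf_subset_setOf.mpr (fun x hx => le_of_lt hx))
      _ ≤ c⁻¹ := ENNReal.le_inv_iff_mul_le.mpr (by rwa [mul_comm] at h1)
  constructor
  · -- contiguity → uniform integrability
    intro hcont ε hε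
    by_contra hcon
    push_neg at hcon
    -- for every natural m there is n with large tail integral at level m
    have hbad : ∀ m : ℕ, ∃ n, ε < ∫⁻ x in {x | (m : ℝ≥0∞) < f n x}, f n x ∂ (P n) := by
      intro m
      obtain ⟨κ, hκ, n, hn⟩ := hcon m (ENNReal.natCast_lt_top m)
      refine ⟨n, lt_of_lt_of_le hn (lintegral_mono_set ?_)⟩
      intro x hx
      exact lt_of_le_of_lt hκ hx
    -- for each n, the tail integral tends to 0
    have haux : ∀ n, ∃ κ : ℕ, ∫⁻ x in {x | (κ : ℝ≥0∞) < f n x}, f n x ∂ (P n) ≤ ε := by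
      intro n
      have htend : Tendsto (fun k : ℕ => ∫⁻ x in {x | (k : ℝ≥0∞) < f n x}, f n x ∂ (P n))
          atTop (nhds 0) := by
        have heq : ∀ k : ℕ, ∫⁻ x in {x | (k : ℝ≥0∞) < f n x}, f n x ∂ (P n)
            = ∫⁻ x, ({x | (k : ℝ≥0∞) < f n x}).indicator (f n) x ∂ (P n) := fun k =>
          (lintegral_indicator (hsetmeas n k) (f n)).symm
        have hdct := tendsto_lintegral_of_dominated_convergence (μ := P n)
          (F := fun k x => ({x | (k : ℝ≥0∞) < f n x}).indicator (f n) x)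
          (f := fun _ => (0 : ℝ≥0∞)) (f n)
          (fun k => (hfmeas n).indicator (hsetmeas n k))
          (fun k => Filter.Eventually.of_forall (fun x => Set.indicator_le_self _ _ x))
          (by rw [hlint n]; exact ENNReal.one_ne_top)
          ?_
        · simpa only [lintegral_zero, heq] using hdct
        · filter_upwards [Measure.rnDeriv_lt_top (Q n) (P n)] with x hx
          obtain ⟨m, hm⟩ := ENNReal.exists_nat_gt hx.ne
          refine tendsto_const_nhds.congr' ?_
          rw [EventuallyEq, eventually_atTop]
          refine ⟨m, fun k hk => ?_⟩
          refine (Set.indicator_of_notMem ?_ _).symm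
          simp only [mem_setOf_eq, not_lt]
          exact le_trans hm.le (Nat.cast_le.mpr hk)
      exact (ENNReal.tendsto_nhds_zero.mp htend ε hε).exists
    set K : ℕ → ℕ := fun n => Nat.find (haux n) with hKdef
    have hbadK : ∀ m : ℕ, ∃ n, m < K n := by
      intro m
      obtain ⟨n, hn⟩ := hbad m
      refine ⟨n, ?_⟩
      by_contra h
      push_neg at h
      have hle : ∫⁻ x in {x | (m : ℝ≥0∞) < f n x}, f n x ∂ (P n) ≤ ε := by
        refine le_trans (lintegral_mono_set (setOf_subset_setOf.mpr
          (fun x hx => lt_of_le_of_lt (Nat.cast_le.mpr h) hx))) (Nat.find_spec (haux n))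
      exact hn.not_ge hle
    have hfreq : ∀ m : ℕ, ∃ᶠ n in atTop, m < K n := by
      intro m
      rw [frequently_atTop]
      intro n₀
      obtain ⟨n, hn⟩ := hbadK (m ⊔ (Finset.range n₀).sup K)
      refine ⟨n, ?_, lt_of_le_of_lt le_sup_left hn⟩
      by_contra h
      push_neg at h
      exact absurd (le_trans (Finset.le_sup (Finset.mem_range.mpr h)) le_sup_right) hn.not_ge
    obtain ⟨φ, hφmono, hφ⟩ := extraction_forall_of_frequently hfreq
    set A : ∀ n, Set (Ω n) := fun n =>
      if ∃ j, φ j = n then {x | ((K n - 1 : ℕ) : ℝ≥0∞) < f n x} else ∅ with hAdef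
    have hAmeas : ∀ n, MeasurableSet (A n) := by
      intro n
      by_cases h : ∃ j, φ j = n
      · rw [show A n = {x | ((K n - 1 : ℕ) : ℝ≥0∞) < f n x} from if_pos h]
        exact hsetmeas n _
      · rw [show A n = ∅ from if_neg h]
        exact MeasurableSet.empty
    have hAphi : ∀ j, A (φ j) = {x | ((K (φ j) - 1 : ℕ) : ℝ≥0∞) < f (φ j) x} := by
      intro j
      exact if_pos ⟨j, rfl⟩
    have hP : Tendsto (fun n => P n (A n)) atTop (nhds 0) := by
      rw [ENNReal.tendsto_nhds_zero]
      intro ε' hε'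
      obtain ⟨M, hM⟩ := ENNReal.exists_inv_nat_lt hε'.ne'
      rw [eventually_atTop]
      refine ⟨φ M, fun n hn => ?_⟩
      by_cases h : ∃ j, φ j = n
      · obtain ⟨j, rfl⟩ := h
        have hjM : M ≤ j := hφmono.le_iff_le.mp hn
        have hMK : M ≤ K (φ j) - 1 := le_trans hjM (Nat.le_sub_one_of_lt (hφ j))
        rw [hAphi j]
        calc P (φ j) {x | ((K (φ j) - 1 : ℕ) : ℝ≥0∞) < f (φ j) x}
            ≤ (((K (φ j) - 1 : ℕ) : ℝ≥0∞))⁻¹ := hMarkov _ _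
          _ ≤ ((M : ℕ) : ℝ≥0∞)⁻¹ := ENNReal.inv_le_inv.mpr (Nat.cast_le.mpr hMK)
          _ ≤ ε' := hM.le
      · rw [show A n = ∅ from if_neg h]
        simp
    have hQbig : ∀ j, ε < Q (φ j) (A (φ j)) := by
      intro j
      have h1 : K (φ j) - 1 < K (φ j) := Nat.sub_lt (Nat.lt_of_le_of_lt (Nat.zero_le j) (hφ j)) one_pos
      have hmin := Nat.find_min (haux (φ j)) h1
      rw [hAphi j, hfdef, ← Measure.setLIntegral_rnDeriv (hac (φ j))]
      exact not_le.mp hmin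
    have htendQ := hcont A hAmeas hP
    have hev := htendQ.eventually_lt_const hε
    have hfr : ∃ᶠ n in atTop, ε < Q n (A n) :=
      (hφmono.tendsto_atTop).frequently (Filter.Frequently.of_forall hQbig)
    obtain ⟨n, hgt, hlt⟩ := (hfr.and_eventually hev).exists
    exact absurd hgt (not_lt.mpr hlt.le)
  · -- uniform integrability → contiguity
    intro hUI A hAmeas hP
    rw [ENNReal.tendsto_nhds_zero]
    intro ε hε
    obtain ⟨κ₀, hκ₀top, hκ⟩ := hUI (ε / 2) (ENNReal.half_pos hε.ne')
    have hmul : Tendsto (fun n => κ₀ * P n (A n)) atTop (nhds 0) := by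
      have := ENNReal.Tendsto.const_mul (a := κ₀) hP (Or.inr hκ₀top.ne)
      simpa using this
    filter_upwards [ENNReal.tendsto_nhds_zero.mp hmul (ε / 2) (ENNReal.half_pos hε.ne')]
      with n hn
    calc Q n (A n) = ∫⁻ x in A n, f n x ∂ (P n) :=
          (Measure.setLIntegral_rnDeriv (hac n) _).symm
      _ ≤ ∫⁻ x in (A n ∩ {x | f n x ≤ κ₀}) ∪ (A n ∩ {x | κ₀ < f n x}), f n x ∂ (P n) := by
          refine lintegral_mono_set ?_
          intro x hx
          rcases le_or_gt (f n x) κ₀ with h | h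
          · exact Or.inl ⟨hx, h⟩
          · exact Or.inr ⟨hx, h⟩
      _ ≤ (∫⁻ x in A n ∩ {x | f n x ≤ κ₀}, f n x ∂ (P n))
          + ∫⁻ x in A n ∩ {x | κ₀ < f n x}, f n x ∂ (P n) := lintegral_union_le _ _ _
      _ ≤ κ₀ * P n (A n) + ε / 2 := by
          refine add_le_add ?_ ?_
          · calc ∫⁻ x in A n ∩ {x | f n x ≤ κ₀}, f n x ∂ (P n)
                ≤ ∫⁻ _ in A n ∩ {x | f n x ≤ κ₀}, κ₀ ∂ (P n) :=
                  setLIntegral_mono measurable_const (fun x hx => hx.2)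
              _ = κ₀ * P n (A n ∩ {x | f n x ≤ κ₀}) := setLIntegral_const _ _
              _ ≤ κ₀ * P n (A n) := mul_le_mul_right (measure_mono inter_subset_left) _
          · exact le_trans (lintegral_mono_set inter_subset_right) (hκ κ₀ le_rfl n)
      _ ≤ ε / 2 + ε / 2 := add_le_add_left hn _
      _ = ε := ENNReal.add_halves ε
end

section
/- Let u: ℝ → ℝ be nondecreasing and concave with u(0) = 0. Then for every ε > 0 there exists a Young function F such that u_F(x) - ε ≤ u(x) for all x ∈ ℝ, where u_F(x) = -F(-x) for x ≤ 0 and u_F(x) = 0 for x > 0. -/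
open MeasureTheory Filter Set Topology

/-- For a concave function, slopes of secants decrease when the interval moves right. -/
lemma concave_slope_anti {u : ℝ → ℝ} (hconc : ConcaveOn ℝ Set.univ u) {a b c d : ℝ}
    (hab : a < b) (hcd : c < d) (hac : a ≤ c) (hbd : b ≤ d) :
    (u d - u c) / (d - c) ≤ (u b - u a) / (b - a) := by
  have hf : ConvexOn ℝ Set.univ (-u) := hconc.neg
  have had : a < d := hab.trans_le hbd
  have h1 : ((-u) b - (-u) a) / (b - a) ≤ ((-u) d - (-u) a) / (d - a) :=
    hf.secant_mono (Set.mem_univ a) (Set.mem_univ b) (Set.mem_univ d)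
      (ne_of_gt hab) (ne_of_gt had) hbd
  have h2 : ((-u) a - (-u) d) / (a - d) ≤ ((-u) c - (-u) d) / (c - d) :=
    hf.secant_mono (Set.mem_univ d) (Set.mem_univ a) (Set.mem_univ c)
      (ne_of_lt had) (ne_of_lt hcd) hac
  simp only [Pi.neg_apply] at h1 h2
  have e1 : (-u a - -u d) / (a - d) = (-u d - -u a) / (d - a) := by
    rw [← neg_div_neg_eq]; ring_nf
  have e2 : (-u c - -u d) / (c - d) = (-u d - -u c) / (d - c) := by
    rw [← neg_div_neg_eq]; ring_nf
  have e3 : (-u b - -u a) / (b - a) = -((u b - u a) / (b - a)) := by ring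
  have e4 : (-u d - -u c) / (d - c) = -((u d - u c) / (d - c)) := by ring
  rw [e1] at h2
  rw [e3] at h1
  rw [e2, e4] at h2
  linarith

theorem concave_utility_minorized_by_young (u : ℝ → ℝ)
    (hmono : Monotone u) (hconc : ConcaveOn ℝ Set.univ u) (hu0 : u 0 = 0) :
    ∀ ε : ℝ, 0 < ε → ∃ F Fp : ℝ → ℝ, IsYoung F Fp ∧
      ∀ x : ℝ, (if x ≤ 0 then -F (-x) else 0) - ε ≤ u x := by
  intro ε hε
  have hcont : Continuous u := by
    have := hconc.continuousOn isOpen_univ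
    exact continuousOn_univ.mp this
  -- choose δ such that |u y| < ε for |y| < δ
  obtain ⟨δ, hδpos, hδ⟩ : ∃ δ > 0, ∀ y : ℝ, |y| < δ → |u y| < ε := by
    have h := Metric.continuousAt_iff.mp (hcont.continuousAt (x := 0)) ε hε
    obtain ⟨δ, hδpos, h⟩ := h
    refine ⟨δ, hδpos, fun y hy => ?_⟩
    have := h (x := y) (by simpa [Real.dist_eq] using hy)
    simpa [Real.dist_eq, hu0] using this
  set a : ℝ := δ / 4 with ha_def
  have hapos : 0 < a := by positivity
  set G : ℝ → ℝ := fun t => -u (-t) with hG_def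
  have hGcont : Continuous G := (hcont.comp continuous_neg).neg
  have hGmono : Monotone G := fun s t hst => by
    simp only [hG_def, neg_le_neg_iff]
    exact hmono (neg_le_neg hst)
  set c : ℝ := max 0 (G (a + 1)) / a with hc_def
  have hcnonneg : 0 ≤ c := div_nonneg (le_max_left _ _) hapos.le
  set dd : ℝ → ℝ := fun s => G (s + 1) - G s with hdd_def
  have hdd_nonneg : ∀ s, 0 ≤ dd s := fun s => by
    have : G s ≤ G (s + 1) := hGmono (by linarith)
    simp only [hdd_def]; linarith
  have hdd_mono : Monotone dd := by
    intro s t hst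
    rcases eq_or_lt_of_le hst with rfl | hst
    · exact le_rfl
    · have key := concave_slope_anti hconc (a := -t - 1) (b := -t) (c := -s - 1) (d := -s)
        (by linarith) (by linarith) (by linarith) (by linarith)
      have e1 : (-s : ℝ) - (-s - 1) = 1 := by ring
      have e2 : (-t : ℝ) - (-t - 1) = 1 := by ring
      rw [e1, e2, div_one, div_one] at key
      simp only [hdd_def, hG_def]
      have es : -(s + 1) = -s - 1 := by ring
      have et : -(t + 1) = -t - 1 := by ring
      rw [es, et]
      linarith
  have hddcont : Continuous dd :=
    ((hGcont.comp (continuous_id.add continuous_const))).sub hGcont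
  set Fp : ℝ → ℝ := fun s => s + (c + dd s) * min 1 (s / a) with hFp_def
  have hFpcont : Continuous Fp := by
    apply continuous_id.add
    exact ((continuous_const.add hddcont).mul
      (continuous_const.min (continuous_id.div_const a)))
  have hFpnonneg : ∀ s, 0 ≤ s → 0 ≤ Fp s := by
    intro s hs
    have h1 : 0 ≤ c + dd s := add_nonneg hcnonneg (hdd_nonneg s)
    have h2 : 0 ≤ min 1 (s / a) := le_min zero_le_one (div_nonneg hs hapos.le)
    simp only [hFp_def]
    have := mul_nonneg h1 h2
    linarith
  set F : ℝ → ℝ := fun t => ∫ s in (0:ℝ)..t, Fp s with hF_def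
  have hFnonneg : ∀ x, 0 ≤ x → 0 ≤ F x := fun x hx =>
    intervalIntegral.integral_nonneg hx (fun s hs => hFpnonneg s hs.1)
  refine ⟨F, Fp, ⟨fun x _ => ((hFpcont.integral_hasStrictDerivAt 0 x).hasDerivAt).hasDerivWithinAt,
      hFpcont.continuousOn, fun x hx => hFnonneg x hx, intervalIntegral.integral_same,
      ?_, ?_, ?_⟩, ?_⟩
  · -- Fp 0 = 0
    simp [hFp_def, zero_div, hapos.ne']
  · -- strict mono
    intro x hx y hy hxy
    simp only [hFp_def]
    have hmin : min 1 (x / a) ≤ min 1 (y / a) := by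
      have hxa : x / a ≤ y / a := by gcongr
      exact min_le_min le_rfl hxa
    have h1 : (c + dd x) * min 1 (x / a) ≤ (c + dd y) * min 1 (y / a) := by
      apply mul_le_mul (add_le_add le_rfl (hdd_mono hxy.le)) hmin
        (le_min zero_le_one (div_nonneg hx hapos.le))
        (add_nonneg hcnonneg (hdd_nonneg y))
    linarith
  · -- tendsto atTop
    refine tendsto_atTop_mono' atTop ?_ tendsto_id
    filter_upwards [eventually_ge_atTop (0:ℝ)] with s hs
    have h1 : 0 ≤ (c + dd s) * min 1 (s / a) :=
      mul_nonneg (add_nonneg hcnonneg (hdd_nonneg s))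
        (le_min zero_le_one (div_nonneg hs hapos.le))
    simp only [hFp_def, id]
    linarith
  · -- main inequality
    intro x
    by_cases hx : x ≤ 0
    · rw [if_pos hx]
      set t : ℝ := -x with ht_def
      have htnn : 0 ≤ t := by simp only [ht_def]; linarith
      have hux : u x = u (-t) := by rw [ht_def]; ring_nf
      by_cases htd : t ≤ δ / 2
      · have habs : |u (-t)| < ε := hδ (-t) (by rw [abs_neg, abs_of_nonneg htnn]; linarith)
        have := (abs_lt.mp habs).1
        have hF0 : 0 ≤ F t := hFnonneg t htnn
        rw [hux]; linarith
      · push_neg at htd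
        have h2a : 2 * a < t := by rw [ha_def]; linarith
        have hat : a ≤ t := by linarith
        -- F t = ∫₀ᵃ + ∫ₐᵗ
        have hsplit : (∫ s in (0:ℝ)..a, Fp s) + (∫ s in a..t, Fp s) = F t :=
          intervalIntegral.integral_add_adjacent_intervals
            (hFpcont.intervalIntegrable _ _) (hFpcont.intervalIntegrable _ _)
        have h1 : 0 ≤ ∫ s in (0:ℝ)..a, Fp s :=
          intervalIntegral.integral_nonneg hapos.le (fun s hs => hFpnonneg s hs.1)
        have h2 : (∫ s in a..t, (c + dd s)) ≤ ∫ s in a..t, Fp s := by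
          apply intervalIntegral.integral_mono_on hat
            ((continuous_const.add hddcont).intervalIntegrable _ _)
            (hFpcont.intervalIntegrable _ _)
          intro s hs
          have hsa : a ≤ s := hs.1
          have h1a : (1:ℝ) ≤ s / a := (one_le_div hapos).mpr hsa
          simp only [hFp_def]
          rw [min_eq_left h1a]
          have : (0:ℝ) ≤ s := hapos.le.trans hsa
          show c + dd s ≤ s + (c + dd s) * 1
          linarith
        have h3 : (∫ s in a..t, (c + dd s)) = c * (t - a) + ∫ s in a..t, dd s := by
          rw [intervalIntegral.integral_add (intervalIntegrable_const)
            (hddcont.intervalIntegrable _ _), intervalIntegral.integral_const]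
          simp [smul_eq_mul, mul_comm]
        have h4 : (∫ s in a..t, dd s)
            = (∫ s in t..(t+1), G s) - ∫ s in a..(a+1), G s := by
          have e1 : (∫ s in a..t, G (s + 1)) = ∫ s in (a+1)..(t+1), G s :=
            intervalIntegral.integral_comp_add_right G 1
          have i1 : (∫ s in a..(a+1), G s) + (∫ s in (a+1)..(t+1), G s)
              = ∫ s in a..(t+1), G s :=
            intervalIntegral.integral_add_adjacent_intervals
              (hGcont.intervalIntegrable _ _) (hGcont.intervalIntegrable _ _)
          have i2 : (∫ s in a..t, G s) + (∫ s in t..(t+1), G s)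
              = ∫ s in a..(t+1), G s :=
            intervalIntegral.integral_add_adjacent_intervals
              (hGcont.intervalIntegrable _ _) (hGcont.intervalIntegrable _ _)
          have e0 : (∫ s in a..t, dd s)
              = (∫ s in a..t, G (s + 1)) - ∫ s in a..t, G s := by
            simp only [hdd_def]
            exact intervalIntegral.integral_sub
              ((by fun_prop : Continuous fun s : ℝ => G (s + 1)).intervalIntegrable _ _)
              (hGcont.intervalIntegrable _ _)
          rw [e0, e1]
          linarith
        have h5 : G t ≤ ∫ s in t..(t+1), G s := by
          have := intervalIntegral.integral_mono_on (μ := MeasureTheory.volume) (f := fun _ => G t) (g := G)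
            (by linarith : t ≤ t + 1) (intervalIntegrable_const)
            (hGcont.intervalIntegrable _ _) (fun s hs => hGmono hs.1)
          rwa [intervalIntegral.integral_const, add_sub_cancel_left, one_smul] at this
        have h6 : (∫ s in a..(a+1), G s) ≤ G (a+1) := by
          have := intervalIntegral.integral_mono_on (μ := MeasureTheory.volume) (f := G) (g := fun _ => G (a+1))
            (by linarith : a ≤ a + 1) (hGcont.intervalIntegrable _ _)
            (intervalIntegrable_const) (fun s hs => hGmono hs.2)
          rwa [intervalIntegral.integral_const, add_sub_cancel_left, one_smul] at this
        have h7 : max 0 (G (a+1)) ≤ c * (t - a) := by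
          have hca : c * a = max 0 (G (a+1)) := by
            rw [hc_def]; field_simp
          have : c * a ≤ c * (t - a) :=
            mul_le_mul_of_nonneg_left (by linarith) hcnonneg
          linarith
        have h8 : G (a+1) ≤ max 0 (G (a+1)) := le_max_right _ _
        have hGt : u (-t) = -G t := by simp [hG_def]
        rw [hux, hGt]
        linarith
    · rw [if_neg hx]
      push_neg at hx
      have : u 0 ≤ u x := hmono hx.le
      linarith
end

section
/- Diagonal mixing preserves two-sided contiguity: suppose for each j ∈ ℕ there are probability measures Q^{n,j} ≪ P^n (n ∈ ℕ) such that (i) there exists δ_j > 0 with Q^{n,j}(A) ≥ δ_j for all n and all A ∈ 𝓕^n with P^n(A) ≥ 2^{-j}, and (ii) (Q^{n,j})_n is contiguous with respect to (P^n)_n for each j. Define Q^n = Σ_{j=1}^∞ 2^{-j} Q^{n,j}. Then each Q^n is a probability measure equivalent to P^n, (Q^n) is contiguous with respect to (P^n), and (P^n) is contiguous with respect to (Q^n). -/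
open MeasureTheory Filter Set Topology
open scoped ENNReal

private lemma geom_tsum_one : ∑' j : ℕ, (2 : ℝ≥0∞)⁻¹ ^ (j + 1) = 1 := by
  rw [show (fun j : ℕ => (2:ℝ≥0∞)⁻¹ ^ (j+1)) = fun j : ℕ => (2:ℝ≥0∞)⁻¹ ^ j * 2⁻¹ from
    funext fun j => by rw [pow_succ], ENNReal.tsum_mul_right, ENNReal.tsum_geometric,
    ENNReal.one_sub_inv_two, inv_inv]
  exact ENNReal.mul_inv_cancel two_ne_zero ENNReal.ofNat_ne_top

private lemma geom_tail (J : ℕ) : ∑' j : ℕ, (2 : ℝ≥0∞)⁻¹ ^ (j + J + 1) = (2 : ℝ≥0∞)⁻¹ ^ J := by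
  have : ∀ j : ℕ, (2 : ℝ≥0∞)⁻¹ ^ (j + J + 1) = (2:ℝ≥0∞)⁻¹ ^ (j + 1) * (2:ℝ≥0∞)⁻¹ ^ J := by
    intro j; rw [← pow_add]; ring_nf
  simp_rw [this]
  rw [ENNReal.tsum_mul_right, geom_tsum_one, one_mul]

theorem diagonal_mixing_bicontiguity
    {Ω : ℕ → Type*} [∀ n, MeasurableSpace (Ω n)]
    (P : ∀ n, Measure (Ω n)) [∀ n, IsProbabilityMeasure (P n)]
    (Q : ℕ → ∀ n, Measure (Ω n))
    [∀ j n, IsProbabilityMeasure (Q j n)]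
    (hac : ∀ j n, Q j n ≪ P n)
    (hlower : ∀ j : ℕ, ∃ δ : ℝ≥0∞, 0 < δ ∧ ∀ n, ∀ A : Set (Ω n), MeasurableSet A →
      (2 : ℝ≥0∞)⁻¹ ^ (j + 1) ≤ P n A → δ ≤ Q j n A)
    (hcontig : ∀ j : ℕ, ∀ A : ∀ n, Set (Ω n), (∀ n, MeasurableSet (A n)) →
      Tendsto (fun n => P n (A n)) atTop (nhds 0) →
      Tendsto (fun n => Q j n (A n)) atTop (nhds 0)) :
    (∀ n, IsProbabilityMeasure (Measure.sum (fun j => (2 : ℝ≥0∞)⁻¹ ^ (j + 1) • Q j n))) ∧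
    (∀ n, Measure.sum (fun j => (2 : ℝ≥0∞)⁻¹ ^ (j + 1) • Q j n) ≪ P n) ∧
    (∀ n, P n ≪ Measure.sum (fun j => (2 : ℝ≥0∞)⁻¹ ^ (j + 1) • Q j n)) ∧
    (∀ A : ∀ n, Set (Ω n), (∀ n, MeasurableSet (A n)) →
      Tendsto (fun n => P n (A n)) atTop (nhds 0) →
      Tendsto (fun n => Measure.sum (fun j => (2 : ℝ≥0∞)⁻¹ ^ (j + 1) • Q j n) (A n)) atTop (nhds 0)) ∧
    (∀ A : ∀ n, Set (Ω n), (∀ n, MeasurableSet (A n)) →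
      Tendsto (fun n => Measure.sum (fun j => (2 : ℝ≥0∞)⁻¹ ^ (j + 1) • Q j n) (A n)) atTop (nhds 0) →
      Tendsto (fun n => P n (A n)) atTop (nhds 0)) := by
  set S : ∀ n, Measure (Ω n) := fun n => Measure.sum (fun j => (2 : ℝ≥0∞)⁻¹ ^ (j + 1) • Q j n)
    with hS
  have hSapp : ∀ n (A : Set (Ω n)), MeasurableSet A →
      S n A = ∑' j : ℕ, (2 : ℝ≥0∞)⁻¹ ^ (j + 1) * Q j n A := by
    intro n A hA
    rw [hS, Measure.sum_apply _ hA]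
    simp [Measure.smul_apply]
  refine ⟨?_, ?_, ?_, ?_, ?_⟩
  · -- probability measure
    intro n
    constructor
    rw [hSapp n univ MeasurableSet.univ]
    simp [measure_univ, geom_tsum_one]
  · -- S ≪ P
    intro n
    refine Measure.AbsolutelyContinuous.mk fun s hs h0 => ?_
    rw [hSapp n s hs]
    simp [ENNReal.tsum_eq_zero, (hac _ n) h0]
  · -- P ≪ S
    intro n
    refine Measure.AbsolutelyContinuous.mk fun s hs h0 => ?_
    rw [hSapp n s hs, ENNReal.tsum_eq_zero] at h0
    by_contra hP
    obtain ⟨j, hj⟩ := ENNReal.exists_inv_two_pow_lt hP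
    obtain ⟨δ, hδ, hQ⟩ := hlower j
    have h1 : (2 : ℝ≥0∞)⁻¹ ^ (j + 1) ≤ P n s := by
      refine le_trans (le_trans ?_ hj.le) le_rfl
      exact pow_le_pow_of_le_one (by simp) (by
        rw [ENNReal.inv_le_one]; exact one_le_two) (Nat.le_succ j)
    have := hQ n s hs h1
    have hQ0 : Q j n s = 0 := by
      have := h0 j
      simpa [pow_ne_zero, ENNReal.inv_ne_zero] using this
    rw [hQ0] at this
    exact hδ.ne' (le_antisymm this zero_le)
  · -- S contiguous w.r.t. P
    intro A hA hP
    rw [ENNReal.tendsto_nhds_zero]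
    intro ε hε
    obtain ⟨J, hJ⟩ := ENNReal.exists_inv_two_pow_lt (a := ε / 2)
      (ENNReal.half_pos hε.ne').ne'
    have hbound : ∀ n, S n (A n) ≤ (∑ j ∈ Finset.range J, Q j n (A n)) + ε / 2 := by
      intro n
      rw [hSapp n (A n) (hA n)]
      rw [← Summable.sum_add_tsum_nat_add' (k := J) (f := fun j => (2 : ℝ≥0∞)⁻¹ ^ (j + 1) * Q j n (A n))
        ENNReal.summable]
      gcongr with j hj
      · calc (2 : ℝ≥0∞)⁻¹ ^ (j + 1) * Q j n (A n) ≤ 1 * Q j n (A n) := by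
              gcongr
              exact pow_le_one₀ zero_le (by rw [ENNReal.inv_le_one]; exact one_le_two)
          _ = Q j n (A n) := one_mul _
      · calc ∑' j : ℕ, (2 : ℝ≥0∞)⁻¹ ^ (j + J + 1) * Q (j + J) n (A n)
            ≤ ∑' j : ℕ, (2 : ℝ≥0∞)⁻¹ ^ (j + J + 1) * 1 := by
              gcongr with j
              exact prob_le_one
          _ = (2 : ℝ≥0∞)⁻¹ ^ J := by simp [geom_tail]
          _ ≤ ε / 2 := hJ.le
    have hsum : Tendsto (fun n => ∑ j ∈ Finset.range J, Q j n (A n)) atTop (nhds 0) := by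
      have := tendsto_finset_sum (f := fun j n => Q j n (A n)) (Finset.range J)
        (fun j _ => hcontig j A hA hP)
      simpa using this
    rw [ENNReal.tendsto_nhds_zero] at hsum
    filter_upwards [hsum (ε / 2) (ENNReal.half_pos hε.ne')] with n hn
    calc S n (A n) ≤ (∑ j ∈ Finset.range J, Q j n (A n)) + ε / 2 := hbound n
      _ ≤ ε / 2 + ε / 2 := by gcongr
      _ = ε := ENNReal.add_halves ε
  · -- P contiguous w.r.t. S
    intro A hA hSt
    rw [ENNReal.tendsto_nhds_zero]
    intro ε hε
    obtain ⟨j, hj⟩ := ENNReal.exists_inv_two_pow_lt (a := ε) hε.ne'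
    obtain ⟨δ, hδ, hQ⟩ := hlower (j + 1)
    have hpos : (0 : ℝ≥0∞) < (2 : ℝ≥0∞)⁻¹ ^ (j + 1 + 1) * δ :=
      ENNReal.mul_pos (pow_ne_zero _ (by simp)) hδ.ne'
    have hev := hSt.eventually_lt_const hpos
    filter_upwards [hev] with n hn
    by_contra hcon
    push_neg at hcon
    have h1 : (2 : ℝ≥0∞)⁻¹ ^ (j + 1 + 1) ≤ P n (A n) := by
      calc (2 : ℝ≥0∞)⁻¹ ^ (j + 1 + 1) ≤ (2 : ℝ≥0∞)⁻¹ ^ j :=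
            pow_le_pow_of_le_one zero_le
              (by rw [ENNReal.inv_le_one]; exact one_le_two) (by omega)
        _ ≤ ε := hj.le
        _ ≤ P n (A n) := hcon.le
    have h2 : δ ≤ Q (j + 1) n (A n) := hQ n (A n) (hA n) h1
    have h3 : (2 : ℝ≥0∞)⁻¹ ^ (j + 1 + 1) * δ ≤ S n (A n) := by
      rw [hSapp n (A n) (hA n)]
      calc (2 : ℝ≥0∞)⁻¹ ^ (j + 1 + 1) * δ
          ≤ (2 : ℝ≥0∞)⁻¹ ^ (j + 1 + 1) * Q (j + 1) n (A n) := by gcongr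
        _ ≤ ∑' k : ℕ, (2 : ℝ≥0∞)⁻¹ ^ (k + 1) * Q k n (A n) :=
            ENNReal.le_tsum (j + 1)
    exact absurd (lt_of_le_of_lt h3 hn) (lt_irrefl _)
end
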